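/- arXiv:2604.03013 — 7 statements merged into one kernel-verified Lean document; each statement's English description precedes it below -/
import Mathlib

section
/- With the same recursions as above, if α^{[K,i]}(τ) = β^{[i]}(τ) for all i and all trees τ with ht(τ) ≤ h−1, then for any error equation discretization matrix A^{K+1}_Δ, the next iterate satisfies α^{[K+1,i]}(τ) = β^{[i]}(τ) for all i and all trees τ with ht(τ) ≤ h. -/
inductive RTree where
  | node : List RTree → RTree

namespace RTree

def size : RTree → ℕ
  | .node ts => 1 + (ts.attach.map (fun x => size x.1)).sum
decreasing_by
  have := List.sizeOf_lt_of_mem x.2; simp only [RTree.node.sizeOf_spec]; omega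

def height : RTree → ℕ
  | .node ts => 1 + (ts.attach.map (fun x => height x.1)).foldr max 0
decreasing_by
  have := List.sizeOf_lt_of_mem x.2; simp only [RTree.node.sizeOf_spec]; omega

def isBamboo : RTree → Prop
  | .node [] => True
  | .node [t] => isBamboo t
  | .node (_ :: _ :: _) => False

def bamboo : ℕ → RTree
  | 0 => .node []
  | n + 1 => .node [bamboo n]

def factorial : RTree → ℕ
  | .node ts => (RTree.node ts).size * (ts.attach.map (fun x => factorial x.1)).prod
decreasing_by
  have := List.sizeOf_lt_of_mem x.2; simp only [RTree.node.sizeOf_spec]; omega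

end RTree

open scoped BigOperators


lemma mem_le_foldr_max : ∀ {l : List ℕ} {x : ℕ}, x ∈ l → x ≤ l.foldr max 0
  | (y :: l), x, hx => by
    rcases List.mem_cons.1 hx with h | h
    · simp [h, List.foldr]
    · exact le_trans (mem_le_foldr_max h) (by simp [List.foldr])

lemma height_child_le {ts : List RTree} {t : RTree} (ht : t ∈ ts) :
    t.height + 1 ≤ (RTree.node ts).height := by
  rw [RTree.height]
  have : t.height ∈ ts.attach.map (fun x => x.1.height) :=
    List.mem_map.2 ⟨⟨t, ht⟩, List.mem_attach _ _, rfl⟩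
  have := mem_le_foldr_max this
  omega

/-- If the internal SDC stage coefficient maps after K iterations agree with those of the
underlying Runge-Kutta method on all trees of height ≤ h−1, then after one more iteration
with an arbitrary EED, they agree on all trees of height ≤ h. -/
theorem sdc_stage_height_order_step (s : ℕ)
    (a aΔ : Fin s → Fin s → ℝ)
    (βi : Fin s → RTree → ℝ)
    (αKi αK1i : Fin s → RTree → ℝ)
    (hβi : ∀ i, ∀ π : List RTree, βi i (.node π) = ∑ j, a i j * (π.map (βi j)).prod)
    (hαK1i : ∀ i, ∀ π : List RTree, αK1i i (.node π) =
      (∑ j, (a i j - aΔ i j) * (π.map (αKi j)).prod) +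
        ∑ j, aΔ i j * (π.map (αK1i j)).prod)
    (h : ℕ)
    (hstage : ∀ i, ∀ τ : RTree, τ.height ≤ h - 1 → αKi i τ = βi i τ) :
    ∀ i, ∀ τ : RTree, τ.height ≤ h → αK1i i τ = βi i τ := by
  suffices H : ∀ n, ∀ i, ∀ τ : RTree, τ.height ≤ n → τ.height ≤ h → αK1i i τ = βi i τ by
    intro i τ hh; exact H τ.height i τ le_rfl hh
  intro n
  induction n with
  | zero =>
    intro i τ h0
    cases τ with | node ts => rw [RTree.height] at h0; omega
  | succ n ih =>
    intro i τ hn hh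
    cases τ with
    | node ts =>
      have hht := fun t (ht : t ∈ ts) => height_child_le ht
      have hch : ∀ t ∈ ts, t.height ≤ n ∧ t.height ≤ h - 1 := by
        intro t ht
        have h1 := hht t ht
        constructor <;> omega
      rw [hαK1i, hβi]
      have hmapK : ∀ j, ts.map (αKi j) = ts.map (βi j) := by
        intro j
        refine List.map_congr_left (fun t ht => ?_)
        exact hstage j t (hch t ht).2
      have hmapK1 : ∀ j, ts.map (αK1i j) = ts.map (βi j) := by
        intro j
        refine List.map_congr_left (fun t ht => ?_)
        exact ih j t (hch t ht).1 (le_trans (hch t ht).2 (Nat.sub_le h 1))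
      simp only [hmapK, hmapK1]
      rw [← Finset.sum_add_distrib]
      congr 1; ext j; ring
end

section
/- An SDC method (A⁰_Δ, A¹_Δ, …, A^K_Δ, A, b) with constant initial guess (A⁰_Δ arbitrary, stages initialized u^{[0,i]} = u_n) satisfies α^{[K]}(τ) = β(τ) for all trees τ with ht(τ) ≤ K; in particular its SDC order p_K (largest p such that α^{[K]}(τ) = β(τ) for all |τ| ≤ p) satisfies p_K ≥ K. -/
open scoped BigOperators

namespace RTree

lemma height_pos (τ : RTree) : 1 ≤ τ.height := by
  cases τ with
  | node ts => rw [height]; omega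

lemma le_foldr_max : ∀ (l : List ℕ), ∀ x ∈ l, x ≤ l.foldr max 0 := by
  intro l
  induction l with
  | nil => intro x hx; simp at hx
  | cons a t ih =>
    intro x hx
    rcases List.mem_cons.mp hx with h | h
    · subst h; exact le_max_left _ _
    · exact le_trans (ih x h) (le_max_right _ _)

lemma height_lt {t : RTree} {ts : List RTree} (h : t ∈ ts) :
    t.height < (RTree.node ts).height := by
  rw [height]
  have hm : t.height ∈ ts.attach.map (fun x => height x.1) :=
    List.mem_map.mpr ⟨⟨t, h⟩, List.mem_attach _ _, rfl⟩
  have := le_foldr_max _ _ hm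
  omega

lemma size_lt {t : RTree} {ts : List RTree} (h : t ∈ ts) :
    t.size < (RTree.node ts).size := by
  rw [size]
  have hm : t.size ∈ ts.attach.map (fun x => size x.1) :=
    List.mem_map.mpr ⟨⟨t, h⟩, List.mem_attach _ _, rfl⟩
  have := List.single_le_sum (fun (x : ℕ) _ => Nat.zero_le x) _ hm
  omega

lemma foldr_max_le_sum {γ : Type*} (l : List γ) (f g : γ → ℕ)
    (h : ∀ x ∈ l, f x ≤ g x) : (l.map f).foldr max 0 ≤ (l.map g).sum := by
  induction l with
  | nil => simp
  | cons c t ih =>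
    simp only [List.map_cons, List.foldr_cons, List.sum_cons]
    have h1 := h c List.mem_cons_self
    have h2 := ih (fun x hx => h x (List.mem_cons_of_mem _ hx))
    exact max_le (le_trans h1 (Nat.le_add_right _ _)) (le_trans h2 (Nat.le_add_left _ _))

lemma height_le_size_aux : ∀ (n : ℕ) (τ : RTree), τ.size ≤ n → τ.height ≤ τ.size := by
  intro n
  induction n with
  | zero =>
    intro τ h; cases τ with
    | node ts => rw [size] at h; omega
  | succ n ih =>
    intro τ h
    cases τ with
    | node ts =>
      rw [height, size]
      have key : ∀ x ∈ ts.attach, height x.1 ≤ size x.1 := by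
        intro x _
        apply ih
        have := size_lt x.2
        omega
      have := foldr_max_le_sum ts.attach (fun x => height x.1) (fun x => size x.1) key
      omega

lemma height_le_size (τ : RTree) : τ.height ≤ τ.size :=
  height_le_size_aux τ.size τ le_rfl

end RTree

/-- An SDC method with K iterations and constant initial guess has height order at
least K and hence SDC order at least K. -/
theorem sdc_order_at_least_K (s K : ℕ) (b : Fin s → ℝ)
    (a : Fin s → Fin s → ℝ) (aΔ : ℕ → Fin s → Fin s → ℝ)
    (β : RTree → ℝ) (βi : Fin s → RTree → ℝ)
    (α : ℕ → Fin s → RTree → ℝ) (αout : RTree → ℝ)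
    (hβ : ∀ π : List RTree, β (.node π) = ∑ i, b i * (π.map (βi i)).prod)
    (hβi : ∀ i, ∀ π : List RTree, βi i (.node π) = ∑ j, a i j * (π.map (βi j)).prod)
    (h0 : ∀ i, ∀ τ : RTree, α 0 i τ = 0)
    (hrec : ∀ k, 1 ≤ k → k ≤ K → ∀ i, ∀ π : List RTree, α k i (.node π) =
      (∑ j, (a i j - aΔ k i j) * (π.map (α (k - 1) j)).prod) +
        ∑ j, aΔ k i j * (π.map (α k j)).prod)
    (hout : ∀ π : List RTree, αout (.node π) = ∑ i, b i * (π.map (α K i)).prod) :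
    (∀ τ : RTree, τ.height ≤ K → αout τ = β τ) ∧
      (∀ τ : RTree, τ.size ≤ K → αout τ = β τ) := by
  -- Key lemma: for k ≤ K and trees of height ≤ k, the stage elementary weights agree.
  have key : ∀ (n : ℕ) (τ : RTree), τ.size ≤ n → ∀ k, k ≤ K → τ.height ≤ k →
      ∀ i, α k i τ = βi i τ := by
    intro n
    induction n with
    | zero =>
      intro τ h
      cases τ with
      | node ts => rw [RTree.size] at h; omega
    | succ n ih =>
      intro τ hsz k hkK hht i
      cases τ with
      | node π =>
        have hk1 : 1 ≤ k := le_trans ((RTree.node π).height_pos) hht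
        have hc : ∀ t ∈ π, t.size ≤ n := by
          intro t ht
          have := RTree.size_lt ht
          omega
        have hh : ∀ t ∈ π, t.height ≤ k - 1 := by
          intro t ht
          have := RTree.height_lt ht
          omega
        have e1 : ∀ j, π.map (α (k - 1) j) = π.map (βi j) := by
          intro j
          refine List.map_congr_left (fun t ht => ?_)
          exact ih t (hc t ht) (k - 1) (le_trans (Nat.sub_le _ _) hkK) (hh t ht) j
        have e2 : ∀ j, π.map (α k j) = π.map (βi j) := by
          intro j
          refine List.map_congr_left (fun t ht => ?_)
          exact ih t (hc t ht) k hkK (le_trans (hh t ht) (Nat.sub_le _ _)) j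
        rw [hrec k hk1 hkK i π, hβi i π]
        simp only [e1, e2]
        rw [← Finset.sum_add_distrib]
        refine Finset.sum_congr rfl (fun j _ => ?_)
        ring
  have main : ∀ τ : RTree, τ.height ≤ K → αout τ = β τ := by
    intro τ hht
    cases τ with
    | node π =>
      rw [hout, hβ]
      refine Finset.sum_congr rfl (fun i _ => ?_)
      have e : π.map (α K i) = π.map (βi i) := by
        refine List.map_congr_left (fun t ht => ?_)
        have h1 := RTree.height_lt ht
        exact key t.size t le_rfl K le_rfl (by omega) i
      rw [e]
  exact ⟨main, fun τ hsz => main τ (le_trans τ.height_le_size hsz)⟩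
end

section
/- Let (A, b, c) be a collocation Runge-Kutta method satisfying C(η): Σⱼ a_{ij} c_j^{q−1} = c_i^q / q for q = 1,…,η, and let the EEDs A^k_Δ satisfy C_{W_k}(η_k): Σⱼ ã^k_{ij} c_j^{q−1} = c_i^q W_{k,q}, with 1 ≤ η_k ≤ η and η_{k+1} ≤ η_k + 1 for k = 1,…,K, with A⁰_Δ = 0. Then for every rooted tree τ with |τ| ≤ η_K there is a constant ω_K(τ) (independent of i) such that the stage coefficient maps satisfy α^{[K,i]}(τ) = c_i^{|τ|} ω_K(τ), where ω_K is extended multiplicatively to forests and satisfies the recursion ω_K(B⁺(π)) = (1/|B⁺(π)|) ω_{K−1}(π) − W_{K,|B⁺(π)|} ω_{K−1}(π) + W_{K,|B⁺(π)|} ω_K(π). -/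
open scoped BigOperators

noncomputable def om (W : ℕ → ℕ → ℝ) : ℕ → RTree → ℝ
  | 0, _ => 0
  | (k+1), .node ts =>
      (1 / ((RTree.node ts).size : ℝ) - W (k+1) (RTree.node ts).size) *
        (ts.attach.map (fun x => om W k x.1)).prod +
      W (k+1) (RTree.node ts).size * (ts.attach.map (fun x => om W (k+1) x.1)).prod
termination_by k t => (k, sizeOf t)
decreasing_by
  · exact Prod.Lex.left _ _ (Nat.lt_succ_self k)
  · have := List.sizeOf_lt_of_mem x.2
    exact Prod.Lex.right _ (by simp only [RTree.node.sizeOf_spec]; omega)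

lemma size_node (π : List RTree) : (RTree.node π).size = 1 + (π.map RTree.size).sum := by
  rw [RTree.size]
  congr 1
  simp [List.attach_map_val]

lemma om_succ (W : ℕ → ℕ → ℝ) (k : ℕ) (π : List RTree) :
    om W (k+1) (.node π) =
      (1 / ((RTree.node π).size : ℝ) - W (k+1) (RTree.node π).size) *
        (π.map (om W k)).prod +
      W (k+1) (RTree.node π).size * (π.map (om W (k+1))).prod := by
  rw [om]
  congr 2 <;> simp [List.attach_map_val]

lemma rt_size_pos (τ : RTree) : 1 ≤ τ.size := by
  cases τ with
  | node ts => rw [RTree.size]; omega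

lemma rt_mem_size_le {t : RTree} {π : List RTree} (h : t ∈ π) :
    t.size ≤ (π.map RTree.size).sum :=
  List.single_le_sum (fun _ _ => Nat.zero_le _) _ (List.mem_map_of_mem h)

lemma prod_factor (c : ℝ) (f g : RTree → ℝ) (π : List RTree)
    (H : ∀ t ∈ π, f t = c ^ t.size * g t) :
    (π.map f).prod = c ^ (π.map RTree.size).sum * (π.map g).prod := by
  induction π with
  | nil => simp
  | cons hd tl ih =>
    simp only [List.map_cons, List.prod_cons, List.sum_cons]
    rw [H hd (by simp), ih (fun t ht => H t (List.mem_cons_of_mem _ ht)), pow_add]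
    ring

/-- Under simplifying assumptions C(η) on the collocation matrix and C_{W_k}(η_k) on the
EEDs, the SDC stage coefficient maps factor as α^{[K,i]}(τ) = c_i^{|τ|} ω_K(τ) for all
trees with |τ| ≤ η_K, with ω_K independent of the stage, multiplicative on forests, and
satisfying the stated recursion. -/
theorem sdc_stage_factorization (s K : ℕ) (hK : 1 ≤ K)
    (c : Fin s → ℝ) (a : Fin s → Fin s → ℝ) (aΔ : ℕ → Fin s → Fin s → ℝ)
    (η : ℕ → ℕ) (ηA : ℕ) (W : ℕ → ℕ → ℝ)
    (hC : ∀ i, ∀ q, 1 ≤ q → q ≤ ηA → ∑ j, a i j * c j ^ (q - 1) = c i ^ q / q)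
    (hCW : ∀ k, 1 ≤ k → k ≤ K → ∀ i, ∀ q, 1 ≤ q → q ≤ η k →
      ∑ j, aΔ k i j * c j ^ (q - 1) = c i ^ q * W k q)
    (hηlb : ∀ k, 1 ≤ k → k ≤ K → 1 ≤ η k ∧ η k ≤ ηA)
    (hηstep : ∀ k, 1 ≤ k → k < K → η (k + 1) ≤ η k + 1)
    (α : ℕ → Fin s → RTree → ℝ)
    (h0 : ∀ i, ∀ τ : RTree, α 0 i τ = 0)
    (hrec : ∀ k, 1 ≤ k → k ≤ K → ∀ i, ∀ π : List RTree, α k i (.node π) =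
      (∑ j, (a i j - aΔ k i j) * (π.map (α (k - 1) j)).prod) +
        ∑ j, aΔ k i j * (π.map (α k j)).prod) :
    ∃ ω : ℕ → RTree → ℝ,
      (∀ τ : RTree, ω 0 τ = 0) ∧
      (∀ k, 1 ≤ k → k ≤ K → ∀ τ : RTree, τ.size ≤ η k → ∀ i,
        α k i τ = c i ^ τ.size * ω k τ) ∧
      (∀ k, 1 ≤ k → k ≤ K → ∀ π : List RTree, (RTree.node π).size ≤ η k →
        ω k (.node π) = (1 / ((RTree.node π).size : ℝ)) * (π.map (ω (k - 1))).prod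
          - W k (RTree.node π).size * (π.map (ω (k - 1))).prod
          + W k (RTree.node π).size * (π.map (ω k)).prod) := by
  refine ⟨om W, fun τ => by rw [om], ?_, ?_⟩
  · -- main factorization
    have main : ∀ k, k ≤ K → ∀ τ : RTree, (k = 0 ∨ τ.size ≤ η k) → ∀ i,
        α k i τ = c i ^ τ.size * om W k τ := by
      intro k
      induction k with
      | zero => intro _ τ _ i; simp [h0, om]
      | succ k ih =>
        intro hkK
        -- strong induction on size bound
        have : ∀ n : ℕ, ∀ τ : RTree, τ.size ≤ n → τ.size ≤ η (k+1) → ∀ i,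
            α (k+1) i τ = c i ^ τ.size * om W (k+1) τ := by
          intro n
          induction n with
          | zero => intro τ hτ; have := rt_size_pos τ; omega
          | succ n ihn =>
            intro τ hτn hτη i
            obtain ⟨π⟩ := τ
            set N := (RTree.node π).size with hN
            have hsz : N = 1 + (π.map RTree.size).sum := size_node π
            have hN1 : 1 ≤ N := rt_size_pos _
            have hNA : N ≤ ηA := le_trans hτη (hηlb (k+1) (Nat.le_add_left _ _) hkK).2
            -- child bounds
            have hchild : ∀ t ∈ π, t.size ≤ N - 1 := by
              intro t ht
              have := rt_mem_size_le ht
              omega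
            have hchildη : ∀ t ∈ π, (k = 0 ∨ t.size ≤ η k) := by
              rcases Nat.eq_zero_or_pos k with hk0 | hk1
              · exact fun t _ => Or.inl hk0
              · intro t ht
                right
                have hstep := hηstep k hk1 (by omega)
                have := hchild t ht
                omega
            -- products at level k
            have e1 : ∀ j, (π.map (α k j)).prod
                = c j ^ (π.map RTree.size).sum * (π.map (om W k)).prod := by
              intro j
              exact prod_factor _ _ _ _ (fun t ht => ih (by omega) t (hchildη t ht) j)
            -- products at level k+1
            have e2 : ∀ j, (π.map (α (k+1) j)).prod
                = c j ^ (π.map RTree.size).sum * (π.map (om W (k+1))).prod := by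
              intro j
              refine prod_factor _ _ _ _ (fun t ht => ?_)
              have h1 := hchild t ht
              exact ihn t (by omega) (by omega) j
            have hm : (π.map RTree.size).sum = N - 1 := by omega
            have hsum1 := hC i N hN1 hNA
            have hsum2 := hCW (k+1) (Nat.le_add_left _ _) hkK i N hN1 hτη
            have hrw := hrec (k+1) (Nat.le_add_left _ _) hkK i π
            simp only [Nat.add_sub_cancel] at hrw
            rw [hrw]
            simp only [e1, e2, hm]
            rw [om_succ]
            have expand1 : ∑ j, (a i j - aΔ (k+1) i j) * (c j ^ (N-1) * (π.map (om W k)).prod)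
                = ((∑ j, a i j * c j ^ (N-1)) - (∑ j, aΔ (k+1) i j * c j ^ (N-1)))
                  * (π.map (om W k)).prod := by
              rw [← Finset.sum_sub_distrib, Finset.sum_mul]
              exact Finset.sum_congr rfl (fun j _ => by ring)
            have expand2 : ∑ j, aΔ (k+1) i j * (c j ^ (N-1) * (π.map (om W (k+1))).prod)
                = (∑ j, aΔ (k+1) i j * c j ^ (N-1)) * (π.map (om W (k+1))).prod := by
              rw [Finset.sum_mul]
              exact Finset.sum_congr rfl (fun j _ => by ring)
            rw [expand1, expand2, hsum1, hsum2, ← hN]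
            have hcast : (N : ℝ) ≠ 0 := by positivity
            field_simp
        intro τ hτ i
        rcases hτ with h | h
        · omega
        · exact this τ.size τ le_rfl h i
    intro k hk1 hkK τ hτ i
    exact main k hkK τ (Or.inr hτ) i
  · -- recursion for ω
    intro k hk1 _ π _
    obtain ⟨k, rfl⟩ := Nat.exists_eq_add_of_le hk1
    simp only [Nat.add_sub_cancel, Nat.add_comm 1 k]
    rw [om_succ]
    ring
end

section
/- In the setting of the previous lemma, additionally assume B(p): Σᵢ bᵢ c_i^{q−1} = 1/q for q = 1,…,p with p ≥ η_K + 1. Then for every tree τ = B⁺(π) with |τ| ≤ η_K + 1, the SDC output coefficient satisfies α^{[K]}(τ) = ω_K(π)/|τ|. -/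
open scoped BigOperators

/-- Under additionally the quadrature condition B(p) with p ≥ η_K + 1, the SDC output
coefficients satisfy α^{[K]}(B⁺(π)) = ω_K(π)/|B⁺(π)| for trees of size ≤ η_K + 1. -/
theorem sdc_output_via_omega (s K : ℕ)
    (b : Fin s → ℝ) (c : Fin s → ℝ) (η : ℕ → ℕ) (p : ℕ)
    (hp : η K + 1 ≤ p)
    (hB : ∀ q, 1 ≤ q → q ≤ p → ∑ i, b i * c i ^ (q - 1) = 1 / (q : ℝ))
    (α : ℕ → Fin s → RTree → ℝ) (αout : RTree → ℝ) (ω : ℕ → RTree → ℝ)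
    (hout : ∀ π : List RTree, αout (.node π) = ∑ i, b i * (π.map (α K i)).prod)
    (hstage : ∀ π : List RTree, (π.map RTree.size).sum ≤ η K → ∀ i,
      (π.map (α K i)).prod = c i ^ (π.map RTree.size).sum * (π.map (ω K)).prod) :
    ∀ π : List RTree, (RTree.node π).size ≤ η K + 1 →
      αout (.node π) = (π.map (ω K)).prod / ((RTree.node π).size : ℝ) := by
  intro π hle
  have hsize : (RTree.node π).size = 1 + (π.map RTree.size).sum := by
    rw [RTree.size]
    congr 1
    rw [List.attach_map_val]
  set n := (π.map RTree.size).sum with hn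
  have hn' : n ≤ η K := by rw [hsize] at hle; omega
  rw [hout, hsize]
  have hq := hB (n+1) (by omega) (by omega)
  simp only [Nat.add_sub_cancel] at hq
  calc ∑ i, b i * (π.map (α K i)).prod
      = ∑ i, (b i * c i ^ n) * (π.map (ω K)).prod := by
        refine Finset.sum_congr rfl fun i _ => ?_
        rw [hstage π hn' i]; ring
    _ = (∑ i, b i * c i ^ n) * (π.map (ω K)).prod := by rw [← Finset.sum_mul]
    _ = (π.map (ω K)).prod / ((1 + n : ℕ) : ℝ) := by
        rw [hq]; push_cast; ring
end

section
/- Consider SDC applied to a collocation method whose underlying RKM has order p and satisfies B(p) and C(η). Suppose the Kth SDC iterate has order p_K with p_K < η_{K+1}, and each EED A^k_Δ satisfies C_{W_k}(η_k) with 1 ≤ η_k ≤ η, η_{k+1} ≤ η_k + 1 for k = 1,…,K+1, and W_{K+1, p_K+1} = 1/(p_K+1). Then the (K+1)st SDC iterate has order p_{K+1} = min{p_K + 2, p}, i.e. an order jump of two occurs in one iteration. -/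
open scoped BigOperators

namespace RTree

lemma size_node (ts : List RTree) : (RTree.node ts).size = 1 + (ts.map RTree.size).sum := by
  rw [RTree.size]; congr 1; rw [List.attach_map_val]

lemma factorial_node (ts : List RTree) :
    (RTree.node ts).factorial = (RTree.node ts).size * (ts.map RTree.factorial).prod := by
  rw [RTree.factorial]; congr 1; rw [List.attach_map_val]

lemma one_le_size (t : RTree) : 1 ≤ t.size := by
  cases t with | node ts => rw [size_node]; omega

theorem factorial_pos : ∀ t : RTree, 0 < t.factorial
  | .node ts => by
    rw [factorial_node]
    apply Nat.mul_pos (one_le_size _)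
    apply List.prod_pos
    intro x hx
    obtain ⟨t, ht, rfl⟩ := List.mem_map.1 hx
    exact factorial_pos t
decreasing_by
  have := List.sizeOf_lt_of_mem ht; simp only [RTree.node.sizeOf_spec]; omega

lemma prod_form (x : ℝ) (g f : RTree → ℝ) (π : List RTree)
    (h : ∀ σ ∈ π, f σ = x ^ σ.size * g σ) :
    (π.map f).prod = x ^ (π.map RTree.size).sum * (π.map g).prod := by
  induction π with
  | nil => simp
  | cons hd tl ih =>
    simp only [List.map_cons, List.prod_cons, List.sum_cons]
    rw [h hd (by simp), ih (fun σ h' => h σ (by simp [h'])), pow_add]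
    ring

lemma forest_pow {s : ℕ} (c : Fin s → ℝ) (f : Fin s → RTree → ℝ) (π : List RTree)
    (h : ∀ σ ∈ π, ∃ e : ℝ, ∀ j, f j σ = c j ^ σ.size * e) :
    ∃ E : ℝ, ∀ j, (π.map (f j)).prod = c j ^ (π.map RTree.size).sum * E := by
  induction π with
  | nil => exact ⟨1, by simp⟩
  | cons hd tl ih =>
    obtain ⟨e, he⟩ := h hd (by simp)
    obtain ⟨E, hE⟩ := ih (fun σ hσ => h σ (by simp [hσ]))
    refine ⟨e * E, fun j => ?_⟩
    simp only [List.map_cons, List.prod_cons, List.sum_cons, he, hE, pow_add]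
    ring

lemma inv_prod_fact (π : List RTree) :
    (π.map (fun t => ((RTree.factorial t : ℝ))⁻¹)).prod
      = (((π.map RTree.factorial).prod : ℕ) : ℝ)⁻¹ := by
  induction π with
  | nil => simp
  | cons hd tl ih =>
    simp only [List.map_cons, List.prod_cons, ih]
    push_cast
    rw [mul_inv]

lemma prod_fact_cast_ne (π : List RTree) : (((π.map RTree.factorial).prod : ℕ) : ℝ) ≠ 0 := by
  refine Nat.cast_ne_zero.mpr (List.prod_pos ?_).ne'
  intro x hx
  obtain ⟨t, ht, rfl⟩ := List.mem_map.1 hx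
  exact factorial_pos t

lemma child_le_sum {π : List RTree} {σ : RTree} (hσ : σ ∈ π) :
    σ.size ≤ (π.map RTree.size).sum :=
  List.single_le_sum (fun _ _ => Nat.zero_le _) _ (List.mem_map_of_mem hσ)

end RTree

/-- Order jump theorem (case 1): for SDC approximating a collocation method of order p
satisfying B(p) and C(η), if the Kth iterate has order p_K with p_K < η_{K+1} and all
EEDs satisfy C_{W_k}(η_k) with the stated compatibility conditions and
W_{K+1,p_K+1} = 1/(p_K+1), then the (K+1)st iterate has order min{p_K + 2, p}. -/
theorem sdc_order_jump (s K : ℕ)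
    (b : Fin s → ℝ) (c : Fin s → ℝ)
    (a : Fin s → Fin s → ℝ) (aΔ : ℕ → Fin s → Fin s → ℝ)
    (β : RTree → ℝ) (βi : Fin s → RTree → ℝ)
    (p : ℕ) (η : ℕ → ℕ) (ηA : ℕ) (W : ℕ → ℕ → ℝ)
    (pK : ℕ)
    -- the collocation method and its coefficient map
    (hβ : ∀ π : List RTree, β (.node π) = ∑ i, b i * (π.map (βi i)).prod)
    (hβi : ∀ i, ∀ π : List RTree, βi i (.node π) = ∑ j, a i j * (π.map (βi j)).prod)
    (hordp : ∀ τ : RTree, τ.size ≤ p → β τ = 1 / (τ.factorial : ℝ))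
    -- simplifying assumptions
    (hB : ∀ q, 1 ≤ q → q ≤ p → ∑ i, b i * c i ^ (q - 1) = 1 / (q : ℝ))
    (hC : ∀ i, ∀ q, 1 ≤ q → q ≤ ηA → ∑ j, a i j * c j ^ (q - 1) = c i ^ q / q)
    (hCW : ∀ k, 1 ≤ k → k ≤ K + 1 → ∀ i, ∀ q, 1 ≤ q → q ≤ η k →
      ∑ j, aΔ k i j * c j ^ (q - 1) = c i ^ q * W k q)
    (hηlb : ∀ k, 1 ≤ k → k ≤ K + 1 → 1 ≤ η k ∧ η k ≤ ηA)
    (hηstep : ∀ k, 1 ≤ k → k < K + 1 → η (k + 1) ≤ η k + 1)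
    (hpK : pK < η (K + 1))
    (hW : W (K + 1) (pK + 1) = 1 / ((pK : ℝ) + 1))
    -- the SDC iteration
    (α : ℕ → Fin s → RTree → ℝ) (αout : ℕ → RTree → ℝ)
    (h0 : ∀ i, ∀ τ : RTree, α 0 i τ = 0)
    (hrec : ∀ k, 1 ≤ k → k ≤ K + 1 → ∀ i, ∀ π : List RTree, α k i (.node π) =
      (∑ j, (a i j - aΔ k i j) * (π.map (α (k - 1) j)).prod) +
        ∑ j, aΔ k i j * (π.map (α k j)).prod)
    (hout : ∀ k, ∀ π : List RTree, αout k (.node π) = ∑ i, b i * (π.map (α k i)).prod)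
    -- the Kth iterate has SDC order pK
    (hordK : ∀ τ : RTree, τ.size ≤ pK → αout K τ = β τ) :
    ∀ τ : RTree, τ.size ≤ min (pK + 2) p → αout (K + 1) τ = β τ := by
  have hη1 : pK + 1 ≤ η (K + 1) := hpK
  have hηA1 : η (K + 1) ≤ ηA := (hηlb (K + 1) (by omega) le_rfl).2
  have hη_lb : ∀ d k, 1 ≤ k → k + d = K + 1 → η (K + 1) ≤ η k + d := by
    intro d
    induction d with
    | zero =>
      intro k _ hk
      have : k = K + 1 := by omega
      subst this; omega
    | succ d ih =>
      intro k hk1 hkd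
      have h1 : η (k + 1) ≤ η k + 1 := hηstep k hk1 (by omega)
      have h2 : η (K + 1) ≤ η (k + 1) + d := ih (k + 1) (by omega) (by omega)
      omega
  -- Lemma A : stage values are powers of c times tree-dependent constants
  have lemA : ∀ N, ∀ τ : RTree, τ.size ≤ N → ∀ k, k ≤ K + 1 →
      τ.size + (K + 1) ≤ pK + 1 + k → ∃ e : ℝ, ∀ i, α k i τ = c i ^ τ.size * e := by
    intro N
    induction N with
    | zero => intro τ hτ; have := RTree.one_le_size τ; omega
    | succ N ih =>
      intro τ hτ k hk hbound
      rcases Nat.eq_zero_or_pos k with rfl | hk1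
      · exact ⟨0, fun i => by simp [h0]⟩
      cases τ with | node π =>
      rw [RTree.size_node] at hτ hbound ⊢
      set S := (π.map RTree.size).sum with hS
      have hchild : ∀ σ ∈ π, σ.size ≤ S := fun σ hσ => RTree.child_le_sum hσ
      obtain ⟨E₁, hE₁⟩ := RTree.forest_pow c (α (k - 1)) π (fun σ hσ =>
        ih σ (by have := hchild σ hσ; omega) (k - 1) (by omega)
          (by have := hchild σ hσ; omega))
      obtain ⟨E₂, hE₂⟩ := RTree.forest_pow c (α k) π (fun σ hσ =>
        ih σ (by have := hchild σ hσ; omega) k hk (by have := hchild σ hσ; omega))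
      rw [← hS] at hE₁ hE₂
      have hd := hη_lb (K + 1 - k) k hk1 (by omega)
      refine ⟨E₁ / ((S : ℝ) + 1) + W k (S + 1) * (E₂ - E₁), fun i => ?_⟩
      have h1 : ∑ j, a i j * c j ^ S = c i ^ (S + 1) / ((S : ℝ) + 1) := by
        have := hC i (S + 1) (by omega) (by omega)
        push_cast at this
        simpa using this
      have h2 : ∑ j, aΔ k i j * c j ^ S = c i ^ (S + 1) * W k (S + 1) := by
        have := hCW k hk1 hk i (S + 1) (by omega) (by omega)
        simpa using this
      rw [hrec k hk1 hk i π]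
      simp only [hE₁, hE₂]
      have hsplit : (∑ j, (a i j - aΔ k i j) * (c j ^ S * E₁))
          + ∑ j, aΔ k i j * (c j ^ S * E₂)
          = (∑ j, a i j * c j ^ S) * E₁ + (∑ j, aΔ k i j * c j ^ S) * (E₂ - E₁) := by
        rw [Finset.sum_mul, Finset.sum_mul, ← Finset.sum_add_distrib, ← Finset.sum_add_distrib]
        exact Finset.sum_congr rfl fun j _ => by ring
      rw [hsplit, h1, h2, show 1 + S = S + 1 from by omega]
      have hq0 : ((S : ℝ) + 1) ≠ 0 := by positivity
      field_simp
  -- Lemma eK : stage values at level K agree with the collocation stages up to size pK - 1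
  have lemEK : ∀ σ : RTree, σ.size + 1 ≤ pK → σ.size + 1 ≤ p → ∀ i,
      α K i σ = c i ^ σ.size * ((σ.factorial : ℝ))⁻¹ := by
    intro σ h1 h2 i
    obtain ⟨e, he⟩ := lemA σ.size σ le_rfl K (by omega) (by omega)
    have htree : (RTree.node [σ]).size = σ.size + 1 := by
      rw [RTree.size_node]; simp [Nat.add_comm]
    have hfact : (((RTree.node [σ]).factorial : ℕ) : ℝ)
        = ((σ.size : ℝ) + 1) * (σ.factorial : ℝ) := by
      rw [RTree.factorial_node, htree]; push_cast; simp
    have hα : αout K (RTree.node [σ]) = β (RTree.node [σ]) :=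
      hordK _ (by rw [htree]; omega)
    rw [hout K [σ], hordp _ (by rw [htree]; omega)] at hα
    simp only [List.map_cons, List.map_nil, List.prod_cons, List.prod_nil, mul_one, he] at hα
    have hsum : (∑ i, b i * (c i ^ σ.size * e)) = (∑ i, b i * c i ^ σ.size) * e := by
      rw [Finset.sum_mul]; exact Finset.sum_congr rfl fun i _ => by ring
    have hBq : ∑ i, b i * c i ^ σ.size = 1 / ((σ.size : ℝ) + 1) := by
      have := hB (σ.size + 1) (by omega) (by omega)
      push_cast at this
      simpa using this
    rw [hsum, hBq, hfact] at hα
    have hq0 : ((σ.size : ℝ) + 1) ≠ 0 := by positivity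
    have hf0 := fun h => (Nat.cast_ne_zero (R := ℝ)).mpr (RTree.factorial_pos σ).ne' h
    have hf0' : ((σ.factorial : ℕ) : ℝ) ≠ 0 := Nat.cast_ne_zero.mpr (RTree.factorial_pos σ).ne'
    rw [he i]
    congr 1
    field_simp at hα
    have h4 : e * (σ.factorial : ℝ) = 1 := by
      have h3 : (e * (σ.factorial : ℝ)) * ((σ.size : ℝ) + 1) = 1 * ((σ.size : ℝ) + 1) := by
        linear_combination ((σ.size : ℝ) + 1) * hα
      have := mul_right_cancel₀ hq0 h3
      linarith
    rw [mul_comm] at h4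
    exact eq_inv_of_mul_eq_one_right h4
  -- Lemma B : stage values at level K+1 agree with the collocation stages up to size pK + 1
  have lemB : ∀ N, ∀ σ : RTree, σ.size ≤ N → σ.size ≤ pK + 1 → σ.size + 1 ≤ p → ∀ i,
      α (K + 1) i σ = c i ^ σ.size * ((σ.factorial : ℝ))⁻¹ := by
    intro N
    induction N with
    | zero => intro σ hσ; have := RTree.one_le_size σ; omega
    | succ N ih =>
      intro σ hσ hσpk hσp i
      cases σ with | node π =>
      rw [RTree.size_node] at hσ hσpk hσp ⊢
      set S := (π.map RTree.size).sum with hS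
      have hchild : ∀ σ ∈ π, σ.size ≤ S := fun σ hσ' => RTree.child_le_sum hσ'
      set D := (π.map (fun t => ((RTree.factorial t : ℝ))⁻¹)).prod with hD
      have hQ : ∀ j, (π.map (α (K + 1) j)).prod = c j ^ S * D := by
        intro j
        rw [RTree.prod_form (c j) _ _ π (fun σ hσ' => ih σ
          (by have := hchild σ hσ'; omega) (by have := hchild σ hσ'; omega)
          (by have := hchild σ hσ'; omega) j), ← hS, ← hD]
      have hfact : (((RTree.node π).factorial : ℕ) : ℝ)
          = ((S : ℝ) + 1) * (((π.map RTree.factorial).prod : ℕ) : ℝ) := by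
        rw [RTree.factorial_node, RTree.size_node, ← hS]
        push_cast
        ring
      have hDval : D = (((π.map RTree.factorial).prod : ℕ) : ℝ)⁻¹ := RTree.inv_prod_fact π
      have hPf := RTree.prod_fact_cast_ne π
      have hq0 : ((S : ℝ) + 1) ≠ 0 := by positivity
      have h1 : ∑ j, a i j * c j ^ S = c i ^ (S + 1) / ((S : ℝ) + 1) := by
        have := hC i (S + 1) (by omega) (by omega)
        push_cast at this
        simpa using this
      rw [hrec (K + 1) (by omega) le_rfl i π]
      by_cases hcase : S + 1 ≤ pK
      · have hP : ∀ j, (π.map (α K j)).prod = c j ^ S * D := by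
          intro j
          rw [RTree.prod_form (c j) _ _ π (fun σ hσ' => lemEK σ
            (by have := hchild σ hσ'; omega) (by have := hchild σ hσ'; omega) j), ← hS, ← hD]
        simp only [Nat.add_sub_cancel, hP, hQ]
        have hsplit : (∑ j, (a i j - aΔ (K + 1) i j) * (c j ^ S * D))
            + ∑ j, aΔ (K + 1) i j * (c j ^ S * D)
            = (∑ j, a i j * c j ^ S) * D := by
          rw [Finset.sum_mul, ← Finset.sum_add_distrib]
          exact Finset.sum_congr rfl fun j _ => by ring
        rw [hsplit, h1, hDval, hfact, show 1 + S = S + 1 from by omega]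
        simp only [mul_inv]
        ring
      · have hSpk : S = pK := by omega
        obtain ⟨E, hE⟩ := RTree.forest_pow c (α K) π (fun σ hσ' =>
          lemA σ.size σ le_rfl K (by omega) (by have := hchild σ hσ'; omega))
        rw [← hS] at hE
        have h2 : ∑ j, aΔ (K + 1) i j * c j ^ S = c i ^ (S + 1) * W (K + 1) (S + 1) := by
          have := hCW (K + 1) (by omega) le_rfl i (S + 1) (by omega) (by omega)
          simpa using this
        simp only [Nat.add_sub_cancel, hE, hQ]
        have hsplit : (∑ j, (a i j - aΔ (K + 1) i j) * (c j ^ S * E))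
            + ∑ j, aΔ (K + 1) i j * (c j ^ S * D)
            = (∑ j, a i j * c j ^ S) * E + (∑ j, aΔ (K + 1) i j * c j ^ S) * (D - E) := by
          rw [Finset.sum_mul, Finset.sum_mul, ← Finset.sum_add_distrib, ← Finset.sum_add_distrib]
          exact Finset.sum_congr rfl fun j _ => by ring
        have hWS : W (K + 1) (S + 1) = 1 / ((S : ℝ) + 1) := by
          rw [hSpk]; exact hW
        rw [hsplit, h1, h2, hWS, hDval, hfact, show 1 + S = S + 1 from by omega]
        simp only [mul_inv]
        ring
  -- conclusion
  intro τ hτ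
  obtain ⟨hτ1, hτ2⟩ := Nat.le_min.mp hτ
  cases τ with | node π =>
  rw [RTree.size_node] at hτ1 hτ2
  set S := (π.map RTree.size).sum with hS
  have hchild : ∀ σ ∈ π, σ.size ≤ S := fun σ hσ' => RTree.child_le_sum hσ'
  set D := (π.map (fun t => ((RTree.factorial t : ℝ))⁻¹)).prod with hD
  have hQ : ∀ i, (π.map (α (K + 1) i)).prod = c i ^ S * D := by
    intro i
    rw [RTree.prod_form (c i) _ _ π (fun σ hσ' => lemB σ.size σ le_rfl
      (by have := hchild σ hσ'; omega) (by have := hchild σ hσ'; omega) i), ← hS, ← hD]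
  rw [hout (K + 1) π, hordp _ (by rw [RTree.size_node, ← hS]; omega)]
  simp only [hQ]
  have hsum : (∑ i, b i * (c i ^ S * D)) = (∑ i, b i * c i ^ S) * D := by
    rw [Finset.sum_mul]; exact Finset.sum_congr rfl fun i _ => by ring
  have hBq : ∑ i, b i * c i ^ S = 1 / ((S : ℝ) + 1) := by
    have := hB (S + 1) (by omega) (by omega)
    push_cast at this
    simpa using this
  have hfact : (((RTree.node π).factorial : ℕ) : ℝ)
      = ((S : ℝ) + 1) * (((π.map RTree.factorial).prod : ℕ) : ℝ) := by
    rw [RTree.factorial_node, RTree.size_node, ← hS]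
    push_cast
    ring
  have hDval : D = (((π.map RTree.factorial).prod : ℕ) : ℝ)⁻¹ := RTree.inv_prod_fact π
  have hPf := RTree.prod_fact_cast_ne π
  have hq0 : ((S : ℝ) + 1) ≠ 0 := by positivity
  rw [hsum, hBq, hDval, hfact]
  simp only [one_div, mul_inv]
end

section
/- Let A be the coefficient matrix of an s-stage collocation method with distinct nonzero nodes c₁ < … < c_s, and consider the matrices B_S^k = I − (A^k_Δ)^{-1} A with A^k_Δ = diag(c)/k for k = 1,…,s. Then the product B_S^s ⋯ B_S^2 B_S^1 = 0, i.e. the stiff-limit SDC iteration matrices for the MIN-SR-FLEX choice are jointly nilpotent after s iterations. -/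
open scoped BigOperators

open Polynomial in
lemma lagrange_pointwise (s : ℕ) (c : Fin s → ℝ) (hc : Function.Injective c)
    (n : ℕ) (hn : n < s) (x : ℝ) :
    ∑ j : Fin s, c j ^ n *
      ∏ k ∈ Finset.univ.filter (fun k => k ≠ j), (x - c k) / (c j - c k) = x ^ n := by
  have hinj : Set.InjOn c (Finset.univ : Finset (Fin s)) := hc.injOn
  have hdeg : ((X : ℝ[X]) ^ n).degree < (Finset.univ : Finset (Fin s)).card := by
    rw [Finset.card_univ, Fintype.card_fin]
    exact lt_of_le_of_lt (Polynomial.degree_X_pow_le n) (by exact_mod_cast hn)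
  have h := Lagrange.eq_interpolate (s := Finset.univ) (v := c) hinj hdeg
  have h2 := congrArg (Polynomial.eval x) h
  rw [Lagrange.interpolate_apply] at h2
  simp only [Polynomial.eval_pow, Polynomial.eval_X, Polynomial.eval_finset_sum,
    Polynomial.eval_mul, Polynomial.eval_C] at h2
  rw [h2]
  refine Finset.sum_congr rfl fun j _ => ?_
  congr 1
  rw [Lagrange.basis, Polynomial.eval_prod, ← Finset.filter_ne']
  refine Finset.prod_congr rfl fun k hk => ?_
  simp only [Finset.mem_filter] at hk
  rw [Lagrange.basisDivisor, Polynomial.eval_mul, Polynomial.eval_C,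
    Polynomial.eval_sub, Polynomial.eval_X, Polynomial.eval_C, div_eq_inv_mul]

lemma A_mulVec_pow (s : ℕ) (c : Fin s → ℝ) (hc : Function.Injective c)
    (A : Matrix (Fin s) (Fin s) ℝ)
    (hA : ∀ i j, A i j =
      ∫ x in (0:ℝ)..(c i), ∏ k ∈ Finset.univ.filter (fun k => k ≠ j), (x - c k) / (c j - c k))
    (n : ℕ) (hn : n < s) :
    A.mulVec (fun j => c j ^ n) = fun i => c i ^ (n + 1) / (n + 1) := by
  funext i
  have hcont : ∀ j : Fin s, Continuous (fun x : ℝ =>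
      c j ^ n * ∏ k ∈ Finset.univ.filter (fun k => k ≠ j), (x - c k) / (c j - c k)) := by
    intro j
    exact continuous_const.mul (continuous_finset_prod _ fun k _ =>
      ((continuous_id.sub continuous_const).div_const _))
  have hint : ∀ j ∈ (Finset.univ : Finset (Fin s)), IntervalIntegrable
      (fun x : ℝ => c j ^ n * ∏ k ∈ Finset.univ.filter (fun k => k ≠ j),
        (x - c k) / (c j - c k)) MeasureTheory.volume 0 (c i) :=
    fun j _ => (hcont j).intervalIntegrable _ _
  calc A.mulVec (fun j => c j ^ n) i
      = ∑ j : Fin s, (∫ x in (0:ℝ)..(c i),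
          c j ^ n * ∏ k ∈ Finset.univ.filter (fun k => k ≠ j), (x - c k) / (c j - c k)) := by
        simp only [Matrix.mulVec, dotProduct, hA]
        refine Finset.sum_congr rfl fun j _ => ?_
        rw [mul_comm, ← intervalIntegral.integral_const_mul]
    _ = ∫ x in (0:ℝ)..(c i), ∑ j : Fin s,
          c j ^ n * ∏ k ∈ Finset.univ.filter (fun k => k ≠ j), (x - c k) / (c j - c k) :=
        (intervalIntegral.integral_finset_sum hint).symm
    _ = ∫ x in (0:ℝ)..(c i), x ^ n := by
        refine intervalIntegral.integral_congr fun x _ => ?_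
        exact lagrange_pointwise s c hc n hn x
    _ = c i ^ (n + 1) / (n + 1) := by rw [integral_pow]; ring

lemma Q_eigen (s : ℕ) (c : Fin s → ℝ) (hc : Function.Injective c)
    (hc0 : ∀ i, c i ≠ 0)
    (A : Matrix (Fin s) (Fin s) ℝ)
    (hA : ∀ i j, A i j =
      ∫ x in (0:ℝ)..(c i), ∏ k ∈ Finset.univ.filter (fun k => k ≠ j), (x - c k) / (c j - c k))
    (n : ℕ) (hn : n < s) :
    ((Matrix.diagonal c)⁻¹ * A).mulVec (fun j => c j ^ n)
      = (((n : ℝ) + 1)⁻¹) • (fun j => c j ^ n) := by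
  have hdiag : (Matrix.diagonal c)⁻¹ = Matrix.diagonal (fun i => (c i)⁻¹) := by
    refine Matrix.inv_eq_left_inv ?_
    rw [Matrix.diagonal_mul_diagonal]
    convert Matrix.diagonal_one using 2
    exact funext fun i => inv_mul_cancel₀ (hc0 i)
  rw [hdiag, ← Matrix.mulVec_mulVec, A_mulVec_pow s c hc A hA n hn]
  funext i
  rw [Matrix.mulVec_diagonal]
  have h1 : ((n : ℝ) + 1) ≠ 0 := by positivity
  have h2 := hc0 i
  simp only [Pi.smul_apply, smul_eq_mul]
  field_simp
  ring

lemma prefix_prod (s : ℕ) (c : Fin s → ℝ) (hc : Function.Injective c)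
    (hc0 : ∀ i, c i ≠ 0)
    (A : Matrix (Fin s) (Fin s) ℝ)
    (hA : ∀ i j, A i j =
      ∫ x in (0:ℝ)..(c i), ∏ k ∈ Finset.univ.filter (fun k => k ≠ j), (x - c k) / (c j - c k))
    (m : ℕ) (n : ℕ) (hn : n < s) :
    (((List.range m).reverse.map
        (fun k => (1 : Matrix (Fin s) (Fin s) ℝ)
          - ((k + 1 : ℕ) : ℝ) • ((Matrix.diagonal c)⁻¹ * A))).prod).mulVec (fun j => c j ^ n)
      = (∏ k ∈ Finset.range m, (1 - ((k : ℝ) + 1) / ((n : ℝ) + 1))) • (fun j => c j ^ n) := by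
  induction m with
  | zero => simp [Matrix.mulVec]
  | succ m ih =>
    rw [List.range_succ, List.reverse_append, List.map_append, List.prod_append]
    simp only [List.reverse_singleton, List.map_cons, List.map_nil, List.prod_cons,
      List.prod_nil, mul_one]
    rw [← Matrix.mulVec_mulVec, ih, Matrix.mulVec_smul, Matrix.sub_mulVec,
      Matrix.one_mulVec, Matrix.smul_mulVec,
      Q_eigen s c hc hc0 A hA n hn, Finset.prod_range_succ]
    have h1 : ((n : ℝ) + 1) ≠ 0 := by positivity
    funext j
    simp only [Pi.sub_apply, Pi.smul_apply, smul_eq_mul]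
    push_cast
    field_simp

/-- For a collocation method with distinct nonzero nodes c ∈ (0,1], the stiff-limit
SDC iteration matrices B_S^k = I − k·diag(c)⁻¹ A for the MIN-SR-FLEX choice
A_Δ^k = diag(c)/k are jointly nilpotent after s iterations:
B_S^s ⋯ B_S^2 B_S^1 = 0. -/
theorem min_sr_flex_nilpotent (s : ℕ) (c : Fin s → ℝ)
    (hc : Function.Injective c) (hc01 : ∀ i, c i ∈ Set.Ioc (0:ℝ) 1)
    (A : Matrix (Fin s) (Fin s) ℝ)
    (hA : ∀ i j, A i j =
      ∫ x in (0:ℝ)..(c i), ∏ k ∈ Finset.univ.filter (fun k => k ≠ j), (x - c k) / (c j - c k)) :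
    (((List.range s).reverse.map
        (fun k => (1 : Matrix (Fin s) (Fin s) ℝ)
          - ((k + 1 : ℕ) : ℝ) • ((Matrix.diagonal c)⁻¹ * A))).prod) = 0 := by
  have hc0 : ∀ i, c i ≠ 0 := fun i => ne_of_gt (hc01 i).1
  set P := (((List.range s).reverse.map
        (fun k => (1 : Matrix (Fin s) (Fin s) ℝ)
          - ((k + 1 : ℕ) : ℝ) • ((Matrix.diagonal c)⁻¹ * A))).prod) with hP
  have key : ∀ n : ℕ, n < s → P.mulVec (fun j => c j ^ n) = 0 := by
    intro n hn
    rw [hP, prefix_prod s c hc hc0 A hA s n hn]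
    have : (∏ k ∈ Finset.range s, (1 - ((k : ℝ) + 1) / ((n : ℝ) + 1))) = 0 := by
      apply Finset.prod_eq_zero (Finset.mem_range.mpr hn)
      have h1 : ((n : ℝ) + 1) ≠ 0 := by positivity
      field_simp
      simp
    rw [this, zero_smul]
  funext i j
  have := Matrix.eq_zero_of_forall_pow_sum_mul_pow_eq_zero (f := c) (v := fun j => P i j) hc ?_
  · exact congrFun this j
  · intro m
    have h := congrFun (key m (m.isLt)) i
    simpa [Matrix.mulVec, dotProduct] using h
end

section
/- Consider the relaxed Runge-Kutta update u_{n+1} = u_n + Δt γ_n Σᵢ bᵢ fᵢ with fᵢ = f(u^{[i]}) and u^{[i]} = u_n + Δt Σⱼ a_{ij} fⱼ, and let S be a symmetric matrix. If γ_n = (2 Σ_{i,j} bᵢ a_{ij} ⟨S fᵢ, fⱼ⟩) / (Σ_{i,j} bᵢ bⱼ ⟨S fᵢ, fⱼ⟩) (with nonzero denominator), then the quadratic form is conserved: u_{n+1}ᵀ S u_{n+1} = u_nᵀ S u_n, provided the vector field satisfies ⟨S u^{[i]}, fᵢ⟩ = 0 for all i (i.e. uᵀ S f(u) = 0 for all u).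 -/
open scoped BigOperators

section Aux

variable {d s : ℕ}

private lemma dp_sum (v : Fin d → ℝ) (t : Fin s → Fin d → ℝ) :
    dotProduct v (∑ i, t i) = ∑ i, dotProduct v (t i) := by
  simp only [dotProduct, Finset.sum_apply, Finset.mul_sum]
  exact Finset.sum_comm

private lemma sum_dp (v : Fin d → ℝ) (t : Fin s → Fin d → ℝ) :
    dotProduct (∑ i, t i) v = ∑ i, dotProduct (t i) v := by
  simp only [dotProduct, Finset.sum_apply, Finset.sum_mul]
  exact Finset.sum_comm

end Aux

/-- Relaxation Runge-Kutta methods conserve the quadratic invariant u ↦ uᵀ S u: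
with the relaxation parameter γₙ chosen as stated, u_{n+1}ᵀ S u_{n+1} = uₙᵀ S uₙ,
provided uᵀ S f(u) = 0 for all u. -/
theorem relaxation_conserves_quadratic (d s : ℕ)
    (f : (Fin d → ℝ) → (Fin d → ℝ)) (S : Matrix (Fin d) (Fin d) ℝ)
    (hS : S.IsSymm)
    (hinv : ∀ u : Fin d → ℝ, dotProduct u (S.mulVec (f u)) = 0)
    (b : Fin s → ℝ) (a : Fin s → Fin s → ℝ) (Δt : ℝ)
    (un : Fin d → ℝ) (u : Fin s → Fin d → ℝ)
    (hu : ∀ i, u i = un + Δt • ∑ j, a i j • f (u j))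
    (denom : ℝ)
    (hdenom : denom = ∑ i, ∑ j, b i * b j * dotProduct (S.mulVec (f (u i))) (f (u j)))
    (hdne : denom ≠ 0)
    (γ : ℝ)
    (hγ : γ = 2 * (∑ i, ∑ j, b i * a i j * dotProduct (S.mulVec (f (u i))) (f (u j)))
      / denom)
    (un1 : Fin d → ℝ)
    (hun1 : un1 = un + (Δt * γ) • ∑ i, b i • f (u i)) :
    dotProduct un1 (S.mulVec un1) = dotProduct un (S.mulVec un) := by
  have swap : ∀ x y : Fin d → ℝ,
      dotProduct x (S.mulVec y) = dotProduct (S.mulVec x) y := by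
    intro x y
    rw [Matrix.dotProduct_mulVec, ← Matrix.mulVec_transpose, hS.eq]
  set A := ∑ i, ∑ j, b i * a i j * dotProduct (S.mulVec (f (u i))) (f (u j)) with hA
  -- key consequence of the invariance at the stages
  have h1 : ∀ i, dotProduct un (S.mulVec (f (u i)))
      = -(Δt * ∑ j, a i j * dotProduct (S.mulVec (f (u i))) (f (u j))) := by
    intro i
    have h0 := hinv (u i)
    nth_rewrite 1 [hu i] at h0
    rw [add_dotProduct, smul_dotProduct, sum_dp] at h0
    have hterm : ∀ j, dotProduct (a i j • f (u j)) (S.mulVec (f (u i)))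
        = a i j * dotProduct (S.mulVec (f (u i))) (f (u j)) := by
      intro j
      rw [smul_dotProduct, dotProduct_comm]
      simp [smul_eq_mul]
    simp only [hterm, smul_eq_mul] at h0
    linarith
  set F := ∑ i, b i • f (u i) with hF
  -- ⟨un, S F⟩ = -Δt * A
  have h2 : dotProduct un (S.mulVec F) = -(Δt * A) := by
    rw [swap, dotProduct_comm, hF, sum_dp]
    have : ∀ i, dotProduct (b i • f (u i)) (S.mulVec un)
        = b i * dotProduct un (S.mulVec (f (u i))) := by
      intro i
      rw [smul_dotProduct, dotProduct_comm, swap, smul_eq_mul]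
    simp only [this, h1, hA, Finset.mul_sum]
    rw [← Finset.sum_neg_distrib]
    apply Finset.sum_congr rfl
    intro i _
    rw [mul_neg, Finset.mul_sum, neg_inj]
    apply Finset.sum_congr rfl
    intro j _
    ring
  -- ⟨F, S F⟩ = denom
  have h3 : dotProduct F (S.mulVec F) = denom := by
    rw [hF, sum_dp, hdenom]
    apply Finset.sum_congr rfl
    intro i _
    rw [smul_dotProduct, swap, dp_sum, Finset.smul_sum]
    apply Finset.sum_congr rfl
    intro j _
    rw [dotProduct_smul]
    simp only [smul_eq_mul]
    ring
  have hγd : γ * denom = 2 * A := by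
    rw [hγ]; field_simp
  simp only [hun1, Matrix.mulVec_add, Matrix.mulVec_smul, add_dotProduct,
    dotProduct_add, smul_dotProduct, dotProduct_smul]
  have h4 : dotProduct F (S.mulVec un) = dotProduct un (S.mulVec F) := by
    rw [swap, dotProduct_comm]
  rw [h4, h2, h3]
  simp only [smul_eq_mul]
  linear_combination Δt ^ 2 * γ * hγd
end
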